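/- Let w ∈ r₋^×. Then the B-coadjoint isotropy algebra b_w equals h°, so the B-coadjoint orbit of w has codimension ℓ − m in b* ≅ b₋. -/

import Mathlib

attribute [local instance 100] LieRing.ofAssociativeRing

/-- Let `w ∈ r₋^×` and let `π : b → End(b₋)` be the (differential of
the) coadjoint representation of the Borel subalgebra `b` on `b* ≅ b₋`,
`x ∙ w = Φ_b⁅x, w⁆`.  Let `h° ⊆ h` be the orthocomplement in `h` of the span of the
cascade and `r = span{e_β}`, and let `f : b → h` be the map `x ↦ Φ_h⁅x, w⁆`.  Assume
(as established in the paper): the coadjoint isotropy algebra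
`b_w = ker(x ↦ π x w)` consists exactly of those `x ∈ h° + r` with `Φ_h⁅x,w⁆ = 0`;
`h° ⊆ ker f`; `f` is nonzero on every nonzero element of `r` (by linear independence of
the coroots `β∨` and nonvanishing of the coefficients of `w`); `dim h° = ℓ - m` and
`dim b = dim b₋`.  Then `b_w = h°`, so the coadjoint orbit `B ∙ w` has codimension
`ℓ - m` in `b₋`. -/
theorem coadjoint_isotropy_eq_h0
    {b : Type*} [LieRing b] [LieAlgebra ℂ b] [Module.Finite ℂ b]
    {V : Type*} [AddCommGroup V] [Module ℂ V] [Module.Finite ℂ V]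
    {h : Type*} [AddCommGroup h] [Module ℂ h]
    (π : b →ₗ⁅ℂ⁆ Module.End ℂ V)   -- the coadjoint action of `b` on `b₋`
    (w : V) (ℓ m : ℕ) (hml : m ≤ ℓ)
    (h₀ r : Submodule ℂ b)
    (f : b →ₗ[ℂ] h)                -- `x ↦ Φ_h ⁅x, w⁆`
    (hker : LinearMap.ker ((π : b →ₗ[ℂ] Module.End ℂ V).flip w)
              = (h₀ ⊔ r) ⊓ LinearMap.ker f)
    (hh₀ : h₀ ≤ LinearMap.ker f)
    (hr : ∀ x ∈ r, x ≠ 0 → f x ≠ 0)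
    (hdimh₀ : Module.finrank ℂ ↥h₀ = ℓ - m)
    (hdimb : Module.finrank ℂ b = Module.finrank ℂ V) :
    LinearMap.ker ((π : b →ₗ[ℂ] Module.End ℂ V).flip w) = h₀ ∧
    Module.finrank ℂ V
        - Module.finrank ℂ (LinearMap.range ((π : b →ₗ[ℂ] Module.End ℂ V).flip w))
      = ℓ - m := by
  have hkeq : LinearMap.ker ((π : b →ₗ[ℂ] Module.End ℂ V).flip w) = h₀ := by
    rw [hker]
    apply le_antisymm
    · rintro x ⟨hx1, hx2⟩
      obtain ⟨a, ha, y, hy, rfl⟩ := Submodule.mem_sup.mp hx1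
      have hfy : f y = 0 := by
        have hfa : f a = 0 := hh₀ ha
        have : f (a + y) = 0 := hx2
        simpa [map_add, hfa] using this
      have : y = 0 := by
        by_contra hy0
        exact hr y hy hy0 hfy
      simpa [this] using ha
    · exact le_inf le_sup_left hh₀
  refine ⟨hkeq, ?_⟩
  have hrn := LinearMap.finrank_range_add_finrank_ker ((π : b →ₗ[ℂ] Module.End ℂ V).flip w)
  rw [hkeq, hdimh₀, hdimb] at hrn
  omega
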